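/- Let G be a matching covered graph and let ∂(X) be a nontrivial tight cut of G. If G is cycle-extendable, then both ∂(X)-contractions G/X and G/X̄ are cycle-extendable. -/

import Mathlib

open SimpleGraph

/-- A multigraph on the ambient vertex type `V`: a set of vertices together with a
symmetric, loopless edge-multiplicity function supported inside the vertex set.
(Multiple edges are recorded by multiplicities.) -/
structure MG (V : Type*) where
  verts : Set V
  mult : V → V → ℕ
  symm : ∀ u v, mult u v = mult v u
  loopless : ∀ v, mult v v = 0
  support : ∀ u v, 0 < mult u v → u ∈ verts ∧ v ∈ verts

/-- The underlying simple graph of a multigraph. -/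
def MG.toSimple {V : Type*} (G : MG V) : SimpleGraph V where
  Adj u v := 0 < G.mult u v
  symm := ⟨by intro u v h; rwa [G.symm v u]⟩
  loopless := ⟨by intro v h; rw [G.loopless v] at h; exact Nat.lt_irrefl 0 h⟩

/-- The degree of a vertex in a multigraph (counting multiplicities). -/
def MG.degree {V : Type*} [Fintype V] (G : MG V) (x : V) : ℕ := ∑ v, G.mult x v

/-- A perfect matching of a multigraph: a matching of the underlying simple graph
covering exactly the vertex set. -/
def MG.IsPM {V : Type*} (G : MG V) (M : G.toSimple.Subgraph) : Prop :=
  M.IsMatching ∧ M.verts = G.verts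

/-- A matching covered multigraph: it has at least two vertices, is connected, and
every edge lies in some perfect matching. -/
def MG.MatchingCovered {V : Type*} (G : MG V) : Prop :=
  G.verts.Nontrivial ∧
  (∀ u ∈ G.verts, ∀ v ∈ G.verts, Relation.ReflTransGen (fun a b => 0 < G.mult a b) u v) ∧
  (∀ u v : V, 0 < G.mult u v →
    ∃ M : G.toSimple.Subgraph, G.IsPM M ∧ M.Adj u v)

/-- A matching covered multigraph is cycle-extendable if every even cycle is conformal,
i.e. deleting its vertices leaves a matchable graph.  The even cycles of a multigraph
are the even cycles of the underlying simple graph together with the cycles of length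
two formed by a pair of parallel edges. -/
def MG.CycleExtendable {V : Type*} (G : MG V) : Prop :=
  (∀ (u : V) (C : G.toSimple.Walk u u), C.IsCycle → Even C.length →
    ∃ M : G.toSimple.Subgraph, M.IsMatching ∧ M.verts = G.verts \ {w | w ∈ C.support}) ∧
  (∀ u v : V, 2 ≤ G.mult u v →
    ∃ M : G.toSimple.Subgraph, M.IsMatching ∧ M.verts = G.verts \ {u, v})

open scoped Classical

/-- `X` determines a tight cut of the matching covered multigraph `G`: `X` is a
nonempty proper subset of the vertex set and every perfect matching contains exactly
one edge with one end in `X` and one end outside `X`. -/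
def MG.IsTightCut {V : Type*} (G : MG V) (X : Set V) : Prop :=
  X ⊆ G.verts ∧ X.Nonempty ∧ X ≠ G.verts ∧
    ∀ M : G.toSimple.Subgraph, G.IsPM M →
      ∃! p : V × V, p.1 ∈ X ∧ p.2 ∈ G.verts \ X ∧ M.Adj p.1 p.2

/-- A tight cut `∂(X)` is nontrivial if both shores have at least two vertices. -/
def MG.IsNontrivialCut {V : Type*} (G : MG V) (X : Set V) : Prop :=
  2 ≤ X.ncard ∧ 2 ≤ (G.verts \ X).ncard

/-- `H` is the `∂(X)`-contraction `G/X` of `G`, with the shore `X` shrunk to the single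
contraction vertex `x`: multiplicities outside `X` are unchanged, and the multiplicity
between a vertex `u ∉ X` and `x` is the total multiplicity between `u` and `X`. -/
def MG.ContractionOf {V : Type*} [Fintype V] (G : MG V) (X : Set V) (x : V) (H : MG V) :
    Prop :=
  x ∈ X ∧
  H.verts = (G.verts \ X) ∪ {x} ∧
  (∀ u v : V, u ∉ X → v ∉ X → H.mult u v = G.mult u v) ∧
  (∀ u : V, u ∉ X → H.mult u x = ∑ w ∈ Finset.univ.filter (· ∈ X), G.mult u w)


namespace CEAux

open SimpleGraph Walk

variable {V : Type*}

lemma bot_isMatching {Γ : SimpleGraph V} : (⊥ : Γ.Subgraph).IsMatching := by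
  intro v hv
  simp only [Subgraph.verts_bot, Set.mem_empty_iff_false] at hv

lemma mem_tail_support_of_closed {Γ : SimpleGraph V} {v z : V} (p : Γ.Walk v v)
    (hnil : p ≠ Walk.nil) (hz : z ∈ p.support) : z ∈ p.support.tail := by
  cases p with
  | nil => exact absurd rfl hnil
  | cons h q =>
    rw [Walk.support_cons] at hz ⊢
    rcases List.mem_cons.mp hz with h1 | h2
    · subst h1; exact q.end_mem_support
    · exact h2

lemma isPath_closed_eq_nil {Γ : SimpleGraph V} {v : V} {p : Γ.Walk v v} (hp : p.IsPath) :
    p = Walk.nil := by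
  by_contra hne
  have h1 : v ∈ p.support.tail := mem_tail_support_of_closed p hne p.start_mem_support
  have h2 := hp.support_nodup
  rw [p.support_eq_cons] at h2
  exact (List.nodup_cons.mp h2).1 h1

lemma length_rotate {Γ : SimpleGraph V} [DecidableEq V] {u v : V} (c : Γ.Walk v v)
    (h : u ∈ c.support) : (c.rotate u h).length = c.length := by
  unfold Walk.rotate
  rw [Walk.length_append, Nat.add_comm, ← Walk.length_append, Walk.take_spec]

lemma mem_support_rotate_iff {Γ : SimpleGraph V} [DecidableEq V] {u v z : V} (c : Γ.Walk v v)
    (hc : c.IsCycle) (h : u ∈ c.support) : z ∈ (c.rotate u h).support ↔ z ∈ c.support := by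
  have hrot := Walk.support_rotate c u h
  have hc' : (c.rotate u h).IsCycle := hc.rotate h
  constructor
  · intro hz
    exact List.mem_of_mem_tail (hrot.mem_iff.mp (mem_tail_support_of_closed _ hc'.ne_nil hz))
  · intro hz
    exact List.mem_of_mem_tail (hrot.mem_iff.mpr (mem_tail_support_of_closed _ hc.ne_nil hz))

lemma evenPathMatching {Γ : SimpleGraph V} :
    ∀ (n : ℕ) {s t : V} (P : Γ.Walk s t), P.length = n → P.IsPath → Even n →
      ∃ M : Γ.Subgraph, M.IsMatching ∧ M.verts = {w | w ∈ P.support} \ {t} := by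
  intro n
  induction n using Nat.strong_induction_on with
  | _ n ih =>
    intro s t P hlen hp heven
    cases P with
    | nil =>
      refine ⟨⊥, bot_isMatching, ?_⟩
      ext z
      simp [Walk.support_nil]
    | cons h₁ P₁ =>
      cases P₁ with
      | nil =>
        exfalso
        rw [Walk.length_cons, Walk.length_nil] at hlen
        rw [← hlen] at heven
        simp at heven
      | cons h₂ P₂ =>
        rename_i b c
        rw [Walk.length_cons, Walk.length_cons] at hlen
        have hp2 : P₂.IsPath := hp.of_cons.of_cons
        have hev2 : Even P₂.length := by
          rw [Nat.even_iff] at heven ⊢; omega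
        obtain ⟨M₂, hM₂, hV₂⟩ := ih P₂.length (by omega) P₂ rfl hp2 hev2
        have hnd := hp.support_nodup
        rw [Walk.support_cons, Walk.support_cons] at hnd
        obtain ⟨hs, hnd'⟩ := List.nodup_cons.mp hnd
        obtain ⟨hb, _⟩ := List.nodup_cons.mp hnd'
        have htP : t ∈ P₂.support := P₂.end_mem_support
        have hst : s ≠ t := by rintro rfl; exact hs (List.mem_cons.mpr (Or.inr htP))
        have hbt : b ≠ t := by rintro rfl; exact hb htP
        refine ⟨Γ.subgraphOfAdj h₁ ⊔ M₂, ?_, ?_⟩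
        · apply (Subgraph.IsMatching.subgraphOfAdj h₁).sup hM₂
          rw [(Subgraph.IsMatching.subgraphOfAdj h₁).support_eq_verts,
            hM₂.support_eq_verts, SimpleGraph.subgraphOfAdj_verts, hV₂]
          rw [Set.disjoint_left]
          rintro z (rfl | rfl) ⟨hz1, _⟩
          · exact hs (List.mem_cons.mpr (Or.inr hz1))
          · exact hb hz1
        · rw [Subgraph.verts_sup, SimpleGraph.subgraphOfAdj_verts, hV₂]
          ext z
          simp only [Set.mem_union, Set.mem_insert_iff, Set.mem_singleton_iff, Set.mem_diff,
            Set.mem_setOf_eq, Walk.support_cons, List.mem_cons]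
          constructor
          · rintro ((rfl | rfl) | ⟨hz, hzt⟩)
            · exact ⟨Or.inl rfl, hst⟩
            · exact ⟨Or.inr (Or.inl rfl), hbt⟩
            · exact ⟨Or.inr (Or.inr hz), hzt⟩
          · rintro ⟨(rfl | rfl | hz), hzt⟩
            · exact Or.inl (Or.inl rfl)
            · exact Or.inl (Or.inr rfl)
            · exact Or.inr ⟨hz, hzt⟩

lemma evenCycleMatching {Γ : SimpleGraph V} {a b : V} (h : Γ.Adj a b) (R : Γ.Walk b a)
    (hC : (Walk.cons h R).IsCycle) (he : Even (Walk.cons h R).length) :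
    ∃ M : Γ.Subgraph, M.IsMatching ∧ M.verts = {w | w ∈ (Walk.cons h R).support} ∧ M.Adj a b := by
  obtain ⟨hRpath, _⟩ := (Walk.cons_isCycle_iff R h).mp hC
  have h3 := hC.three_le_length
  rw [Walk.length_cons] at h3
  have hnn : ¬ R.Nil := by rw [Walk.not_nil_iff_lt_length]; omega
  obtain ⟨c, hbc, R₂, rfl⟩ := Walk.not_nil_iff.mp hnn
  have hp2 : R₂.IsPath := hRpath.of_cons
  have hev2 : Even R₂.length := by
    rw [Walk.length_cons, Walk.length_cons, Nat.even_iff] at he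
    rw [Nat.even_iff]; omega
  obtain ⟨M₂, hM₂, hV₂⟩ := evenPathMatching R₂.length R₂ rfl hp2 hev2
  have hnd : ((Walk.cons h (Walk.cons hbc R₂)).support.tail).Nodup :=
    ((Walk.isCycle_def _).mp hC).2.2
  rw [Walk.support_cons, Walk.support_cons, List.tail_cons] at hnd
  obtain ⟨hbR, _⟩ := List.nodup_cons.mp hnd
  refine ⟨Γ.subgraphOfAdj h ⊔ M₂, ?_, ?_, ?_⟩
  · apply (Subgraph.IsMatching.subgraphOfAdj h).sup hM₂
    rw [(Subgraph.IsMatching.subgraphOfAdj h).support_eq_verts, hM₂.support_eq_verts,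
      SimpleGraph.subgraphOfAdj_verts, hV₂]
    rw [Set.disjoint_left]
    rintro z (rfl | rfl) ⟨hz1, hz2⟩
    · exact hz2 rfl
    · exact hbR hz1
  · rw [Subgraph.verts_sup, SimpleGraph.subgraphOfAdj_verts, hV₂]
    ext z
    simp only [Set.mem_union, Set.mem_insert_iff, Set.mem_singleton_iff, Set.mem_diff,
      Set.mem_setOf_eq, Walk.support_cons, List.mem_cons]
    constructor
    · rintro ((rfl | rfl) | ⟨hz, _⟩)
      · exact Or.inl rfl
      · exact Or.inr (Or.inl rfl)
      · exact Or.inr (Or.inr hz)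
    · rintro (rfl | rfl | hz)
      · exact Or.inl (Or.inl rfl)
      · exact Or.inl (Or.inr rfl)
      · by_cases hza : z = a
        · exact Or.inl (Or.inl hza)
        · exact Or.inr ⟨hz, hza⟩
  · apply Subgraph.sup_adj.mpr
    exact Or.inl (by simp)

lemma evenCycleMatching' {Γ : SimpleGraph V} {a : V} (C : Γ.Walk a a)
    (hC : C.IsCycle) (he : Even C.length) :
    ∃ M : Γ.Subgraph, M.IsMatching ∧ M.verts = {w | w ∈ C.support} := by
  obtain ⟨b, hab, R, rfl⟩ := Walk.not_nil_iff.mp hC.not_nil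
  obtain ⟨M, h1, h2, _⟩ := evenCycleMatching hab R hC he
  exact ⟨M, h1, h2⟩

lemma exists_adj_of_mem_support {Γ : SimpleGraph V} [DecidableEq V] {u z : V} {C : Γ.Walk u u}
    (hC : C.IsCycle) (hz : z ∈ C.support) : ∃ y, Γ.Adj z y := by
  have h := hC.rotate hz
  obtain ⟨y, hadj, _, _⟩ := Walk.not_nil_iff.mp h.not_nil
  exact ⟨y, hadj⟩

lemma walkOfSeq {Γ : SimpleGraph V} (a : ℕ → V) :
    ∀ n, (∀ i, i < n → Γ.Adj (a i) (a (i+1))) →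
      ∃ Q : Γ.Walk (a 0) (a n), Q.length = n ∧ Q.support = (List.range (n+1)).map a := by
  intro n
  induction n with
  | zero => exact fun _ => ⟨Walk.nil, rfl, by rw [List.range_succ]; simp⟩
  | succ n ih =>
    intro h
    obtain ⟨Q, hl, hs⟩ := ih (fun i hi => h i (hi.trans n.lt_succ_self))
    refine ⟨Q.concat (h n n.lt_succ_self), ?_, ?_⟩
    · rw [Walk.length_concat, hl]
    · rw [Walk.support_concat, hs,
        List.range_succ (n := n+1), List.map_append]
      simp

noncomputable def pt {Γ : SimpleGraph V} (M : Γ.Subgraph) (hM : M.IsMatching) (z : V) : V :=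
  if h : z ∈ M.verts then (hM h).choose else z

lemma pt_adj {Γ : SimpleGraph V} {M : Γ.Subgraph} (hM : M.IsMatching) {z : V}
    (hz : z ∈ M.verts) : M.Adj z (pt M hM z) := by
  rw [pt, dif_pos hz]; exact (hM hz).choose_spec.1

lemma pt_eq {Γ : SimpleGraph V} {M : Γ.Subgraph} (hM : M.IsMatching) {z y : V}
    (h : M.Adj z y) : y = pt M hM z := by
  have hz : z ∈ M.verts := M.edge_vert h
  rw [pt, dif_pos hz]; exact (hM hz).choose_spec.2 y h

end CEAux

namespace CEAux

open SimpleGraph Walk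

variable {V : Type*}

lemma altPath {Γ : SimpleGraph V} [Fintype V] {S : Set V} {M₁ M₂ : Γ.Subgraph}
    (hM₁ : M₁.IsMatching) (hM₂ : M₂.IsMatching)
    (hSv₁ : S ⊆ M₁.verts) (hSv₂ : S ⊆ M₂.verts)
    {w₁ w₂ u v : V} (hw₁ : w₁ ∈ S) (hw₂ : w₂ ∈ S) (hu : u ∉ S) (hv : v ∉ S)
    (h1 : M₁.Adj w₁ u) (h2 : M₂.Adj w₂ v)
    (t1 : ∀ p q, M₁.Adj p q → p ∈ S → q ∉ S → p = w₁)
    (t2 : ∀ p q, M₂.Adj p q → p ∈ S → q ∉ S → p = w₂) :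
    ∃ Q : Γ.Walk w₁ w₂, Q.IsPath ∧ Even Q.length ∧ ∀ z ∈ Q.support, z ∈ S := by
  classical
  set f := pt M₁ hM₁ with hf
  set g := pt M₂ hM₂ with hg
  let a : ℕ → V := fun n => Nat.rec w₁ (fun k ak => if Even k then g ak else f ak) n
  have ha0 : a 0 = w₁ := rfl
  have hstep : ∀ k, a (k+1) = if Even k then g (a k) else f (a k) := fun k => rfl
  have hgadj : ∀ z ∈ S, M₂.Adj z (g z) := fun z hz => pt_adj hM₂ (hSv₂ hz)
  have hfadj : ∀ z ∈ S, M₁.Adj z (f z) := fun z hz => pt_adj hM₁ (hSv₁ hz)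
  have hginv : ∀ z y, M₂.Adj z y → y = g z := fun z y h => pt_eq hM₂ h
  have hfinv : ∀ z y, M₁.Adj z y → y = f z := fun z y h => pt_eq hM₁ h
  have hgS : ∀ z ∈ S, z ≠ w₂ → g z ∈ S := by
    intro z hz hne
    by_contra hgz
    exact hne (t2 z (g z) (hgadj z hz) hz hgz)
  have hfS : ∀ z ∈ S, z ≠ w₁ → f z ∈ S := by
    intro z hz hne
    by_contra hfz
    exact hne (t1 z (f z) (hfadj z hz) hz hfz)
  have hfw₁ : f w₁ = u := (hfinv w₁ u h1).symm
  have hgw₂ : g w₂ = v := (hginv w₂ v h2).symm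
  have main : ∀ n, (∀ i, i < n → a i ≠ w₂) → a n ∈ S ∧ ∀ i, i < n → a i ≠ a n := by
    intro n
    induction n using Nat.strong_induction_on with
    | _ n ih =>
      intro hno
      cases n with
      | zero => exact ⟨hw₁, fun i hi => absurd hi (Nat.not_lt_zero i)⟩
      | succ m =>
        have ihm := ih m (Nat.lt_succ_self m) (fun i hi => hno i (hi.trans (Nat.lt_succ_self m)))
        have hamS := ihm.1
        have hamne : a m ≠ w₂ := hno m (Nat.lt_succ_self m)
        by_cases hEm : Even m
        · have heq : a (m+1) = g (a m) := by rw [hstep m, if_pos hEm]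
          have hS : a (m+1) ∈ S := heq ▸ hgS _ hamS hamne
          refine ⟨hS, ?_⟩
          intro i hi hieq
          cases i with
          | zero =>
            have hw : w₁ = g (a m) := by rw [← ha0, hieq, heq]
            have hA : M₂.Adj (a m) w₁ := hw ▸ hgadj _ hamS
            have h1' : a m = g w₁ := hginv w₁ (a m) hA.symm
            rcases Nat.eq_zero_or_pos m with hm0 | hmpos
            · subst hm0
              rw [ha0] at h1'
              have hcontr := hgadj w₁ hw₁
              rw [← h1'] at hcontr
              exact (M₂.adj_sub hcontr).ne rfl
            · have h1m : (1:ℕ) < m := by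
                rw [Nat.even_iff] at hEm; omega
              have ha1 : a 1 = g w₁ := by
                have h' := hstep 0
                rw [if_pos (by decide : Even 0), ha0] at h'
                exact h'
              exact ihm.2 1 h1m (ha1.trans h1'.symm)
          | succ j =>
            have hjm : j < m := Nat.succ_lt_succ_iff.mp hi
            have hjS : a j ∈ S :=
              (ih j (by omega) (fun i hi' => hno i (by omega))).1
            by_cases hEj : Even j
            · have heqj : a (j+1) = g (a j) := by rw [hstep j, if_pos hEj]
              have hgg : g (a j) = g (a m) := by rw [← heqj, hieq, heq]
              have e1 : a j = g (g (a j)) := hginv _ _ (hgadj _ hjS).symm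
              have e2 : a m = g (g (a m)) := hginv _ _ (hgadj _ hamS).symm
              have : a j = a m := by rw [e1, e2, hgg]
              exact ihm.2 j hjm this
            · have heqj : a (j+1) = f (a j) := by rw [hstep j, if_neg hEj]
              have hAdj2 : M₂.Adj (a m) (a (m+1)) := heq ▸ hgadj _ hamS
              have hEj1 : Even (j+1) := Nat.even_add_one.mpr hEj
              have heqj2 : a (j+2) = g (a (j+1)) := by rw [hstep (j+1), if_pos hEj1]
              have hjm2 : a (j+2) = a m := by
                rw [heqj2]
                exact (hginv _ _ (by rw [hieq]; exact hAdj2.symm)).symm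
              rcases lt_trichotomy (j+2) m with hlt | heq2 | hgt
              · exact ihm.2 (j+2) hlt hjm2
              · exfalso
                rw [← heq2, Nat.even_iff] at hEm
                rw [Nat.even_iff] at hEj
                omega
              · have hjm' : j + 1 = m := by omega
                have hmm : a m = g (a m) := by rw [← heq, ← hjm', hieq, hjm']
                exact (M₂.adj_sub (hgadj _ hamS)).ne hmm
        · have heq : a (m+1) = f (a m) := by rw [hstep m, if_neg hEm]
          have hamw₁ : a m ≠ w₁ := by
            intro h0
            have hmpos : 0 < m := by
              rcases Nat.eq_zero_or_pos m with h | h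
              · exact absurd (h ▸ (by decide : Even 0)) (h ▸ hEm)
              · exact h
            exact ihm.2 0 hmpos (by rw [ha0, h0])
          have hS : a (m+1) ∈ S := heq ▸ hfS _ hamS hamw₁
          refine ⟨hS, ?_⟩
          intro i hi hieq
          cases i with
          | zero =>
            have hw : w₁ = f (a m) := by rw [← ha0, hieq, heq]
            have hA : M₁.Adj (a m) w₁ := hw ▸ hfadj _ hamS
            have : a m = f w₁ := hfinv _ _ hA.symm
            rw [hfw₁] at this
            exact hu (this ▸ hamS)
          | succ j =>
            have hjm : j < m := Nat.succ_lt_succ_iff.mp hi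
            have hjS : a j ∈ S :=
              (ih j (by omega) (fun i hi' => hno i (by omega))).1
            by_cases hEj : Even j
            · have heqj : a (j+1) = g (a j) := by rw [hstep j, if_pos hEj]
              have hAdj2 : M₁.Adj (a m) (a (m+1)) := heq ▸ hfadj _ hamS
              have hEj1 : ¬ Even (j+1) := by simp [Nat.even_add_one, hEj]
              have heqj2 : a (j+2) = f (a (j+1)) := by rw [hstep (j+1), if_neg hEj1]
              have hjm2 : a (j+2) = a m := by
                rw [heqj2]
                exact (hfinv _ _ (by rw [hieq]; exact hAdj2.symm)).symm
              rcases lt_trichotomy (j+2) m with hlt | heq2 | hgt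
              · exact ihm.2 (j+2) hlt hjm2
              · exfalso
                rw [← heq2] at hEm
                exact hEm (by rw [Nat.even_add_one]; simp [Nat.even_add_one, hEj])
              · have hjm' : j + 1 = m := by omega
                have hmm : a m = f (a m) := by rw [← heq, ← hjm', hieq, hjm']
                exact (M₁.adj_sub (hfadj _ hamS)).ne hmm
            · have heqj : a (j+1) = f (a j) := by rw [hstep j, if_neg hEj]
              have hgg : f (a j) = f (a m) := by rw [← heqj, hieq, heq]
              have e1 : a j = f (f (a j)) := hfinv _ _ (hfadj _ hjS).symm
              have e2 : a m = f (f (a m)) := hfinv _ _ (hfadj _ hamS).symm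
              have : a j = a m := by rw [e1, e2, hgg]
              exact ihm.2 j hjm this
  have hex : ∃ n, a n = w₂ := by
    by_contra hcc
    push_neg at hcc
    have hinj : Function.Injective (fun i : Fin (Fintype.card V + 1) => a i) := by
      intro i j hij
      simp only at hij
      by_contra hne
      rcases lt_trichotomy (i : ℕ) (j : ℕ) with h | h | h
      · exact (main j (fun k _ => hcc k)).2 i h hij
      · exact hne (Fin.ext h)
      · exact (main i (fun k _ => hcc k)).2 j h hij.symm
    have := Fintype.card_le_of_injective _ hinj
    simp [Fintype.card_fin] at this
  have hexm : ∃ n, a n = w₂ ∧ ∀ i, i < n → a i ≠ w₂ := by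
    obtain ⟨n, hn⟩ := hex
    induction n using Nat.strong_induction_on with
    | _ n ih =>
      rcases Classical.em (∀ i, i < n → a i ≠ w₂) with h | h
      · exact ⟨n, hn, h⟩
      · push_neg at h
        obtain ⟨i, hi, hieq⟩ := h
        exact ih i hi hieq
  obtain ⟨n₀, hn₀, hmin⟩ := hexm
  have hmain := main n₀ hmin
  have hEn : Even n₀ := by
    by_contra hodd
    have hn0 : n₀ ≠ 0 := fun h => hodd (h ▸ (by decide : Even 0))
    obtain ⟨m, hm⟩ : ∃ m, n₀ = m + 1 := ⟨n₀ - 1, by omega⟩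
    have hEm : Even m := by
      rw [hm, Nat.even_add_one] at hodd
      exact not_not.mp hodd
    have hamS := (main m (fun i hi => hmin i (by omega))).1
    have heq : a n₀ = g (a m) := by rw [hm, hstep m, if_pos hEm]
    have hA : M₂.Adj (a m) w₂ := by rw [← hn₀, heq]; exact hgadj _ hamS
    have : a m = g w₂ := hginv _ _ hA.symm
    rw [hgw₂] at this
    exact hv (this ▸ hamS)
  have hchain : ∀ i, i < n₀ → Γ.Adj (a i) (a (i+1)) := by
    intro i hi
    have hiS := (main i (fun k hk => hmin k (by omega))).1
    rw [hstep i]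
    by_cases hEi : Even i
    · rw [if_pos hEi]; exact M₂.adj_sub (hgadj _ hiS)
    · rw [if_neg hEi]; exact M₁.adj_sub (hfadj _ hiS)
  obtain ⟨Q, hQl, hQs⟩ := walkOfSeq a n₀ hchain
  refine ⟨Q.copy ha0 hn₀, ?_, ?_, ?_⟩
  · rw [Walk.isPath_copy, Walk.isPath_def, hQs]
    apply List.Nodup.map_on ?_ List.nodup_range
    intro i hi j hj hij
    rw [List.mem_range] at hi hj
    by_contra hne
    rcases lt_trichotomy i j with h | h | h
    · exact (main j (fun k hk => hmin k (by omega))).2 i h hij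
    · exact hne h
    · exact (main i (fun k hk => hmin k (by omega))).2 j h hij.symm
  · rw [Walk.length_copy, hQl]; exact hEn
  · intro z hz
    rw [Walk.support_copy, hQs] at hz
    obtain ⟨i, hir, rfl⟩ := List.mem_map.mp hz
    rw [List.mem_range] at hir
    exact (main i (fun k hk => hmin k (by omega))).1

end CEAux

namespace CEAux

open SimpleGraph Walk

variable {V : Type*}

lemma support_mem_of_cycle (H : MG V) [DecidableEq V] {u z : V} {C : H.toSimple.Walk u u}
    (hC : C.IsCycle) (hz : z ∈ C.support) : z ∈ H.verts := by
  obtain ⟨y, hy⟩ := exists_adj_of_mem_support hC hz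
  exact (H.support z y hy).1

lemma tight_pair [Fintype V] (G : MG V) (S : Set V)
    (htight : ∀ M : G.toSimple.Subgraph, G.IsPM M →
      ∃! p : V × V, p.1 ∈ S ∧ p.2 ∈ G.verts \ S ∧ M.Adj p.1 p.2)
    (M : G.toSimple.Subgraph) (hMpm : G.IsPM M) {w u : V}
    (hwS : w ∈ S) (hu : u ∈ G.verts \ S) (hadj : M.Adj w u) :
    ∀ p q, M.Adj p q → p ∈ S → q ∉ S → p = w ∧ q = u := by
  obtain ⟨⟨a, b⟩, _, huq⟩ := htight M hMpm
  have hpair := huq (w, u) ⟨hwS, hu, hadj⟩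
  intro p q h hp hq
  have hqG : q ∈ G.verts := by rw [← hMpm.2]; exact M.edge_vert h.symm
  have := (huq (p, q) ⟨hp, ⟨hqG, hq⟩, h⟩).trans hpair.symm
  exact Prod.ext_iff.mp this

lemma toH_matching (G H : MG V) (S : Set V)
    (hmult : ∀ u v : V, u ∉ S → v ∉ S → H.mult u v = G.mult u v)
    (M : G.toSimple.Subgraph) (hM : M.IsMatching)
    (hnc : ∀ p q, M.Adj p q → (p ∈ S ↔ q ∈ S)) :
    ∃ N : H.toSimple.Subgraph, N.IsMatching ∧ N.verts = M.verts \ S := by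
  refine ⟨{ verts := M.verts \ S
            Adj := fun p q => M.Adj p q ∧ p ∉ S ∧ q ∉ S
            adj_sub := ?_
            edge_vert := ?_
            symm := ?_ }, ?_, rfl⟩
  · rintro p q ⟨h, hp, hq⟩
    show 0 < H.mult p q
    rw [hmult p q hp hq]
    exact M.adj_sub h
  · rintro p q ⟨h, hp, _⟩
    exact ⟨M.edge_vert h, hp⟩
  · refine ⟨?_⟩; rintro p q ⟨h, hp, hq⟩
    exact ⟨h.symm, hq, hp⟩
  · rintro v ⟨hvM, hvS⟩
    obtain ⟨w, hw, huniq⟩ := hM hvM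
    have hwS : w ∉ S := fun hwS => hvS ((hnc v w hw).mpr hwS)
    exact ⟨w, ⟨hw, hvS, hwS⟩, fun y hy => huniq y hy.1⟩

lemma toHx_matching [Fintype V] (G H : MG V) (S : Set V) (x a b : V)
    (hxS : x ∈ S)
    (hmult : ∀ u v : V, u ∉ S → v ∉ S → H.mult u v = G.mult u v)
    (hmultx : ∀ u : V, u ∉ S → H.mult u x = ∑ w ∈ Finset.univ.filter (· ∈ S), G.mult u w)
    (M : G.toSimple.Subgraph) (hM : M.IsMatching)
    (ha : a ∈ S) (hb : b ∉ S) (hab : M.Adj a b)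
    (huniq : ∀ p q, M.Adj p q → p ∈ S → q ∉ S → p = a ∧ q = b) :
    ∃ N : H.toSimple.Subgraph, N.IsMatching ∧ N.verts = (M.verts \ S) ∪ {x} := by
  classical
  have hbx : 0 < H.mult b x := by
    rw [hmultx b hb]
    have hmem : a ∈ Finset.univ.filter (· ∈ S) := Finset.mem_filter.mpr ⟨Finset.mem_univ a, ha⟩
    have h1 : 0 < G.mult b a := M.adj_sub hab.symm
    have h2 : G.mult b a ≤ ∑ w ∈ Finset.univ.filter (· ∈ S), G.mult b w :=
      Finset.single_le_sum (fun i _ => Nat.zero_le _) hmem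
    omega
  have hxb : 0 < H.mult x b := by rw [H.symm]; exact hbx
  have hbM : b ∈ M.verts := M.edge_vert hab.symm
  have hbnex : b ≠ x := fun h => hb (h ▸ hxS)
  refine ⟨{ verts := (M.verts \ S) ∪ {x}
            Adj := fun p q => (M.Adj p q ∧ p ∉ S ∧ q ∉ S) ∨ (p = b ∧ q = x) ∨ (p = x ∧ q = b)
            adj_sub := ?_
            edge_vert := ?_
            symm := ?_ }, ?_, rfl⟩
  · rintro p q (⟨h, hp, hq⟩ | ⟨rfl, rfl⟩ | ⟨rfl, rfl⟩)
    · show 0 < H.mult p q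
      rw [hmult p q hp hq]
      exact M.adj_sub h
    · exact hbx
    · exact hxb
  · rintro p q (⟨h, hp, _⟩ | ⟨rfl, rfl⟩ | ⟨rfl, rfl⟩)
    · exact Or.inl ⟨M.edge_vert h, hp⟩
    · exact Or.inl ⟨hbM, hb⟩
    · exact Or.inr rfl
  · refine ⟨?_⟩; rintro p q (⟨h, hp, hq⟩ | ⟨rfl, rfl⟩ | ⟨rfl, rfl⟩)
    · exact Or.inl ⟨h.symm, hq, hp⟩
    · exact Or.inr (Or.inr ⟨rfl, rfl⟩)
    · exact Or.inr (Or.inl ⟨rfl, rfl⟩)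
  · rintro v hv
    rcases hv with hv | hvx
    · by_cases hvb : v = b
      · subst hvb
        refine ⟨x, Or.inr (Or.inl ⟨rfl, rfl⟩), ?_⟩
        rintro y (⟨h, _, hyS⟩ | ⟨_, rfl⟩ | ⟨hbx', _⟩)
        · exfalso
          obtain ⟨w, hw, hu⟩ := hM hbM
          have h1 := hu y h
          have h2 := hu a hab.symm
          exact hyS (by rw [h1.trans h2.symm]; exact ha)
        · rfl
        · exact absurd hbx' hbnex
      · obtain ⟨w, hw, hu⟩ := hM hv.1
        have hwS : w ∉ S := by
          intro hwS
          exact hvb (huniq w v hw.symm hwS hv.2).2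
        refine ⟨w, Or.inl ⟨hw, hv.2, hwS⟩, ?_⟩
        rintro y (⟨h, _, _⟩ | ⟨hvb', _⟩ | ⟨hvx', _⟩)
        · exact hu y h
        · exact absurd hvb' hvb
        · exact absurd (hvx' ▸ hxS) hv.2
    · have hvx' : v = x := hvx
      subst hvx'
      refine ⟨b, Or.inr (Or.inr ⟨rfl, rfl⟩), ?_⟩
      rintro y (⟨h, hp, _⟩ | ⟨hxb', _⟩ | ⟨_, rfl⟩)
      · exact absurd hxS hp
      · exact absurd hxb'.symm hbnex
      · rfl

end CEAux

namespace CEAux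

open SimpleGraph Walk

variable {V : Type*}

lemma part1_away [Fintype V] (G H : MG V) (S : Set V) (x : V)
    (hSsub : S ⊆ G.verts)
    (htight : ∀ M : G.toSimple.Subgraph, G.IsPM M →
      ∃! p : V × V, p.1 ∈ S ∧ p.2 ∈ G.verts \ S ∧ M.Adj p.1 p.2)
    (hxS : x ∈ S) (hHverts : H.verts = (G.verts \ S) ∪ {x})
    (hmult : ∀ u v : V, u ∉ S → v ∉ S → H.mult u v = G.mult u v)
    (hmultx : ∀ u : V, u ∉ S → H.mult u x = ∑ w ∈ Finset.univ.filter (· ∈ S), G.mult u w)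
    (hce : G.CycleExtendable)
    {u₀ : V} (C : H.toSimple.Walk u₀ u₀) (hC : C.IsCycle) (hE : Even C.length)
    (hx : x ∉ C.support) :
    ∃ N : H.toSimple.Subgraph, N.IsMatching ∧ N.verts = H.verts \ {w | w ∈ C.support} := by
  classical
  have hsupH : ∀ z ∈ C.support, z ∈ G.verts \ S := by
    intro z hz
    have hzH := support_mem_of_cycle H hC hz
    have hzx : z ≠ x := fun h => hx (h ▸ hz)
    rw [hHverts] at hzH
    rcases hzH with h | h
    · exact h
    · exact absurd h hzx
  have hedges : ∀ e ∈ C.edges, e ∈ G.toSimple.edgeSet := by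
    intro e
    induction e using Sym2.ind with
    | _ p q =>
      intro he
      have hadj : H.toSimple.Adj p q := C.adj_of_mem_edges he
      have hp := hsupH p (C.fst_mem_support_of_mem_edges he)
      have hq := hsupH q (C.snd_mem_support_of_mem_edges he)
      rw [SimpleGraph.mem_edgeSet]
      show 0 < G.mult p q
      rw [← hmult p q hp.2 hq.2]
      exact hadj
  set CΓ := C.transfer G.toSimple hedges with hCΓdef
  have hCΓ : CΓ.IsCycle := hC.transfer _
  have hCΓl : CΓ.length = C.length := Walk.length_transfer _ _
  have hCΓs : CΓ.support = C.support := Walk.support_transfer _ _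
  obtain ⟨M, hMm, hMv⟩ := hce.1 u₀ CΓ hCΓ (by rw [hCΓl]; exact hE)
  obtain ⟨MC, hMCm, hMCv⟩ := evenCycleMatching' CΓ hCΓ (by rw [hCΓl]; exact hE)
  have hdisj : Disjoint M.support MC.support := by
    rw [hMm.support_eq_verts, hMCm.support_eq_verts, hMv, hMCv]
    exact Set.disjoint_left.mpr (fun z hz hz' => hz.2 hz')
  have hsubver : {w | w ∈ CΓ.support} ⊆ G.verts := fun z hz =>
    (hsupH z (by rw [← hCΓs]; exact hz)).1
  have hpm' : G.IsPM (M ⊔ MC) :=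
    ⟨hMm.sup hMCm hdisj, by
      rw [Subgraph.verts_sup, hMv, hMCv]; exact Set.diff_union_of_subset hsubver⟩
  obtain ⟨⟨a, b⟩, ⟨haS, hbv, hab⟩, hu⟩ := htight _ hpm'
  have habM : M.Adj a b := by
    rcases Subgraph.sup_adj.mp hab with h | h
    · exact h
    · exfalso
      have : a ∈ MC.verts := MC.edge_vert h
      rw [hMCv] at this
      exact (hsupH a (by rw [← hCΓs]; exact this)).2 haS
  have huniq : ∀ p q, M.Adj p q → p ∈ S → q ∉ S → p = a ∧ q = b := by
    intro p q h hp hq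
    have hqG : q ∈ G.verts := by
      have := M.edge_vert h.symm
      rw [hMv] at this
      exact this.1
    exact Prod.ext_iff.mp (hu (p, q) ⟨hp, ⟨hqG, hq⟩, Subgraph.sup_adj.mpr (Or.inl h)⟩)
  obtain ⟨N, hNm, hNv⟩ :=
    toHx_matching G H S x a b hxS hmult hmultx M hMm haS hbv.2 habM huniq
  refine ⟨N, hNm, ?_⟩
  rw [hNv, hMv, hHverts, hCΓs]
  ext z
  simp only [Set.mem_union, Set.mem_diff, Set.mem_setOf_eq, Set.mem_singleton_iff]
  constructor
  · rintro (⟨⟨hzG, hzsup⟩, hzS⟩ | rfl)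
    · exact ⟨Or.inl ⟨hzG, hzS⟩, hzsup⟩
    · exact ⟨Or.inr rfl, hx⟩
  · rintro ⟨hz1, hzsup⟩
    rcases hz1 with ⟨hzG, hzS⟩ | rfl
    · exact Or.inl ⟨⟨hzG, hzsup⟩, hzS⟩
    · exact Or.inr rfl

lemma part1_rotated [Fintype V] (G H : MG V) (S : Set V) (x : V)
    (hSsub : S ⊆ G.verts)
    (hpm : ∀ u v : V, 0 < G.mult u v → ∃ M : G.toSimple.Subgraph, G.IsPM M ∧ M.Adj u v)
    (htight : ∀ M : G.toSimple.Subgraph, G.IsPM M →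
      ∃! p : V × V, p.1 ∈ S ∧ p.2 ∈ G.verts \ S ∧ M.Adj p.1 p.2)
    (hxS : x ∈ S) (hHverts : H.verts = (G.verts \ S) ∪ {x})
    (hmult : ∀ u v : V, u ∉ S → v ∉ S → H.mult u v = G.mult u v)
    (hmultx : ∀ u : V, u ∉ S → H.mult u x = ∑ w ∈ Finset.univ.filter (· ∈ S), G.mult u w)
    (hce : G.CycleExtendable)
    (C : H.toSimple.Walk x x) (hC : C.IsCycle) (hE : Even C.length) :
    ∃ N : H.toSimple.Subgraph, N.IsMatching ∧ N.verts = H.verts \ {w | w ∈ C.support} := by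
  classical
  obtain ⟨b, hxb, R, rfl⟩ := Walk.not_nil_iff.mp hC.not_nil
  obtain ⟨hRpath, _⟩ := (Walk.cons_isCycle_iff R hxb).mp hC
  have h3 := hC.three_le_length
  rw [Walk.length_cons] at h3 hE
  have hnn : ¬ R.reverse.Nil := by
    rw [Walk.not_nil_iff_lt_length, Walk.length_reverse]; omega
  obtain ⟨v, hxv, P, hPeq⟩ := Walk.not_nil_iff.mp hnn
  have hRrev : R.reverse.IsPath := hRpath.reverse
  have hxnotP : x ∉ P.support := by
    have h' := hRrev.support_nodup
    rw [hPeq, Walk.support_cons] at h'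
    exact (List.nodup_cons.mp h').1
  have hPpath : P.IsPath := by
    have h' := hRrev
    rw [hPeq] at h'
    exact h'.of_cons
  have hPlen : P.length + 1 = R.length := by
    have h' := congrArg Walk.length hPeq
    rw [Walk.length_reverse, Walk.length_cons] at h'
    omega
  have hRsup : ∀ z, z ∈ R.support ↔ (z = x ∨ z ∈ P.support) := by
    intro z
    constructor
    · intro hz
      have h' : z ∈ R.reverse.support := by
        rw [Walk.support_reverse, List.mem_reverse]; exact hz
      rw [hPeq, Walk.support_cons] at h'
      exact List.mem_cons.mp h'
    · intro hz
      have h' : z ∈ R.reverse.support := by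
        rw [hPeq, Walk.support_cons]; exact List.mem_cons.mpr hz
      rw [Walk.support_reverse, List.mem_reverse] at h'
      exact h'
  have hsupC : ∀ z, z ∈ (Walk.cons hxb R).support ↔ (z = x ∨ z ∈ P.support) := by
    intro z
    rw [Walk.support_cons, List.mem_cons, hRsup z]
    tauto
  have hsupH : ∀ z ∈ P.support, z ∈ G.verts \ S := by
    intro z hz
    have hzH : z ∈ H.verts := support_mem_of_cycle H hC ((hsupC z).mpr (Or.inr hz))
    have hzx : z ≠ x := fun h => hxnotP (h ▸ hz)
    rw [hHverts] at hzH
    rcases hzH with h | h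
    · exact h
    · exact absurd h hzx
  have hPedges : ∀ e ∈ P.edges, e ∈ G.toSimple.edgeSet := by
    intro e
    induction e using Sym2.ind with
    | _ p q =>
      intro he
      have hadj : H.toSimple.Adj p q := P.adj_of_mem_edges he
      have hp := hsupH p (P.fst_mem_support_of_mem_edges he)
      have hq := hsupH q (P.snd_mem_support_of_mem_edges he)
      rw [SimpleGraph.mem_edgeSet]
      show 0 < G.mult p q
      rw [← hmult p q hp.2 hq.2]
      exact hadj
  set PΓ : G.toSimple.Walk v b := P.transfer G.toSimple hPedges with hPΓdef
  have hPΓsup : PΓ.support = P.support := Walk.support_transfer _ _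
  have hPΓpath : PΓ.IsPath := hPpath.transfer _
  have hPΓlen : PΓ.length = P.length := Walk.length_transfer _ _
  have hbP : b ∈ P.support := P.end_mem_support
  have hvP : v ∈ P.support := P.start_mem_support
  have hbv : b ≠ v := by
    rintro rfl
    have h0 := isPath_closed_eq_nil hPpath
    rw [h0] at hPlen
    simp only [Walk.length_nil] at hPlen
    omega
  have hbS := hsupH b hbP
  have hvS := hsupH v hvP
  have hbw : ∃ w ∈ S, G.toSimple.Adj b w := by
    have hbx0 : 0 < H.mult b x := by rw [H.symm]; exact hxb
    rw [hmultx b hbS.2] at hbx0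
    by_contra hno
    push_neg at hno
    have hz : ∑ w ∈ Finset.univ.filter (· ∈ S), G.mult b w = 0 :=
      Finset.sum_eq_zero (fun w hw => by
        have hwS := (Finset.mem_filter.mp hw).2
        have := hno w hwS
        by_contra h0
        exact this (by show 0 < G.mult b w; omega))
    omega
  have hvw : ∃ w ∈ S, G.toSimple.Adj v w := by
    have hvx0 : 0 < H.mult v x := by rw [H.symm]; exact hxv
    rw [hmultx v hvS.2] at hvx0
    by_contra hno
    push_neg at hno
    have hz : ∑ w ∈ Finset.univ.filter (· ∈ S), G.mult v w = 0 :=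
      Finset.sum_eq_zero (fun w hw => by
        have hwS := (Finset.mem_filter.mp hw).2
        have := hno w hwS
        by_contra h0
        exact this (by show 0 < G.mult v w; omega))
    omega
  obtain ⟨w₁, hw₁S, hbw₁⟩ := hbw
  obtain ⟨w₂, hw₂S, hvw₂⟩ := hvw
  obtain ⟨M₁, hM₁pm, hM₁adj⟩ := hpm b w₁ hbw₁
  obtain ⟨M₂, hM₂pm, hM₂adj⟩ := hpm v w₂ hvw₂
  have t1 := tight_pair G S htight M₁ hM₁pm hw₁S hbS hM₁adj.symm
  have t2 := tight_pair G S htight M₂ hM₂pm hw₂S hvS hM₂adj.symm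
  obtain ⟨Q, hQpath, hQeven, hQS⟩ :=
    altPath hM₁pm.1 hM₂pm.1 (by rw [hM₁pm.2]; exact hSsub) (by rw [hM₂pm.2]; exact hSsub)
      hw₁S hw₂S hbS.2 hvS.2 hM₁adj.symm hM₂adj.symm
      (fun p q h hp hq => (t1 p q h hp hq).1) (fun p q h hp hq => (t2 p q h hp hq).1)
  set W : G.toSimple.Walk w₁ b := Q.append (Walk.cons hvw₂.symm PΓ) with hWdef
  have hWsup : W.support = Q.support ++ PΓ.support := by
    rw [hWdef, Walk.support_append, Walk.support_cons, List.tail_cons]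
  have hQdisj : ∀ z ∈ Q.support, z ∉ PΓ.support := by
    intro z hz hz'
    exact (hsupH z (by rw [← hPΓsup]; exact hz')).2 (hQS z hz)
  have hWpath : W.IsPath := by
    rw [Walk.isPath_def, hWsup]
    exact List.Nodup.append hQpath.support_nodup hPΓpath.support_nodup hQdisj
  have hC' : (Walk.cons hbw₁ W).IsCycle := by
    rw [Walk.cons_isCycle_iff]
    refine ⟨hWpath, ?_⟩
    intro hmem
    rw [hWdef, Walk.edges_append, List.mem_append, Walk.edges_cons, List.mem_cons] at hmem
    rcases hmem with h | h | h
    · exact hbS.2 (hQS b (Q.fst_mem_support_of_mem_edges h))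
    · rcases Sym2.eq_iff.mp h with ⟨h1, _⟩ | ⟨h1, _⟩
      · exact hbS.2 (h1 ▸ hw₂S)
      · exact hbv h1
    · have := PΓ.snd_mem_support_of_mem_edges h
      exact (hsupH w₁ (by rw [← hPΓsup]; exact this)).2 hw₁S
  have hlenC' : (Walk.cons hbw₁ W).length = Q.length + PΓ.length + 2 := by
    rw [Walk.length_cons, hWdef, Walk.length_append, Walk.length_cons]
    omega
  have hEC' : Even (Walk.cons hbw₁ W).length := by
    rw [hlenC', hPΓlen]
    rw [Nat.even_iff] at hE hQeven ⊢
    omega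
  obtain ⟨M, hMm, hMv⟩ := hce.1 b _ hC' hEC'
  obtain ⟨MC, hMCm, hMCv, hMCadj⟩ := evenCycleMatching hbw₁ W hC' hEC'
  have hsupC' : ∀ z, z ∈ (Walk.cons hbw₁ W).support ↔ (z ∈ Q.support ∨ z ∈ P.support) := by
    intro z
    rw [Walk.support_cons, List.mem_cons, hWsup, List.mem_append, hPΓsup]
    constructor
    · rintro (rfl | h | h)
      · exact Or.inr hbP
      · exact Or.inl h
      · exact Or.inr h
    · rintro (h | h)
      · exact Or.inr (Or.inl h)
      · exact Or.inr (Or.inr h)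
  have hdisj : Disjoint M.support MC.support := by
    rw [hMm.support_eq_verts, hMCm.support_eq_verts, hMv, hMCv]
    exact Set.disjoint_left.mpr (fun z hz hz' => hz.2 hz')
  have hsubver : {w | w ∈ (Walk.cons hbw₁ W).support} ⊆ G.verts := by
    intro z hz
    rcases (hsupC' z).mp hz with h | h
    · exact hSsub (hQS z h)
    · exact (hsupH z h).1
  have hpm' : G.IsPM (M ⊔ MC) :=
    ⟨hMm.sup hMCm hdisj, by
      rw [Subgraph.verts_sup, hMv, hMCv]; exact Set.diff_union_of_subset hsubver⟩
  have hT := tight_pair G S htight (M ⊔ MC) hpm' hw₁S hbS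
    (Subgraph.sup_adj.mpr (Or.inr hMCadj.symm))
  have hw₁supp : w₁ ∈ {w | w ∈ (Walk.cons hbw₁ W).support} :=
    (hsupC' w₁).mpr (Or.inl Q.start_mem_support)
  have hMncut : ∀ p q, M.Adj p q → (p ∈ S ↔ q ∈ S) := by
    intro p q h
    have hpM := M.edge_vert h
    have hqM := M.edge_vert h.symm
    rw [hMv] at hpM hqM
    constructor
    · intro hp
      by_contra hq
      have := (hT p q (Subgraph.sup_adj.mpr (Or.inl h)) hp hq).1
      exact hpM.2 (this ▸ hw₁supp)
    · intro hq
      by_contra hp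
      have := (hT q p (Subgraph.sup_adj.mpr (Or.inl h.symm)) hq hp).1
      exact hqM.2 (this ▸ hw₁supp)
  obtain ⟨N, hNm, hNv⟩ := toH_matching G H S hmult M hMm hMncut
  refine ⟨N, hNm, ?_⟩
  rw [hNv, hMv, hHverts]
  ext z
  simp only [Set.mem_diff, Set.mem_union, Set.mem_setOf_eq, Set.mem_singleton_iff]
  constructor
  · rintro ⟨⟨hzG, hzsup⟩, hzS⟩
    refine ⟨Or.inl ⟨hzG, hzS⟩, ?_⟩
    intro hzC
    rcases (hsupC z).mp hzC with rfl | hzP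
    · exact hzS hxS
    · exact hzsup ((hsupC' z).mpr (Or.inr hzP))
  · rintro ⟨hz1, hzC⟩
    rcases hz1 with ⟨hzG, hzS⟩ | rfl
    · refine ⟨⟨hzG, ?_⟩, hzS⟩
      intro hzsup
      rcases (hsupC' z).mp hzsup with h | h
      · exact hzS (hQS z h)
      · exact hzC ((hsupC z).mpr (Or.inr h))
    · exact absurd ((hsupC z).mpr (Or.inl rfl)) hzC

end CEAux

namespace CEAux

open SimpleGraph Walk

variable {V : Type*}

lemma part2x [Fintype V] (G H : MG V) (S : Set V) (x : V)
    (hSsub : S ⊆ G.verts)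
    (hpm : ∀ u v : V, 0 < G.mult u v → ∃ M : G.toSimple.Subgraph, G.IsPM M ∧ M.Adj u v)
    (htight : ∀ M : G.toSimple.Subgraph, G.IsPM M →
      ∃! p : V × V, p.1 ∈ S ∧ p.2 ∈ G.verts \ S ∧ M.Adj p.1 p.2)
    (hxS : x ∈ S) (hHverts : H.verts = (G.verts \ S) ∪ {x})
    (hmult : ∀ u v : V, u ∉ S → v ∉ S → H.mult u v = G.mult u v)
    (hmultx : ∀ u : V, u ∉ S → H.mult u x = ∑ w ∈ Finset.univ.filter (· ∈ S), G.mult u w)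
    (hce : G.CycleExtendable)
    (u : V) (hux : u ≠ x) (h2 : 2 ≤ H.mult u x) :
    ∃ N : H.toSimple.Subgraph, N.IsMatching ∧ N.verts = H.verts \ {u, x} := by
  classical
  have huH : u ∈ H.verts := (H.support u x (by omega)).1
  have huS : u ∈ G.verts \ S := by
    rw [hHverts] at huH
    rcases huH with h | h
    · exact h
    · exact absurd h hux
  rw [hmultx u huS.2] at h2
  by_cases hbig : ∃ w ∈ S, 2 ≤ G.mult u w
  · obtain ⟨w, hwS, hw2⟩ := hbig
    obtain ⟨M, hMm, hMv⟩ := hce.2 u w hw2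
    have hadj : G.toSimple.Adj u w := by show 0 < G.mult u w; omega
    have hwG : w ∈ G.verts := hSsub hwS
    have hpm' : G.IsPM (M ⊔ G.toSimple.subgraphOfAdj hadj) := by
      constructor
      · apply hMm.sup (Subgraph.IsMatching.subgraphOfAdj hadj)
        rw [hMm.support_eq_verts, (Subgraph.IsMatching.subgraphOfAdj hadj).support_eq_verts,
          hMv, SimpleGraph.subgraphOfAdj_verts]
        exact Set.disjoint_left.mpr (fun z hz hz' => hz.2 hz')
      · rw [Subgraph.verts_sup, hMv, SimpleGraph.subgraphOfAdj_verts]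
        apply Set.diff_union_of_subset
        rintro z (rfl | rfl)
        · exact huS.1
        · exact hwG
    have hT := tight_pair G S htight _ hpm' hwS huS
      (Subgraph.sup_adj.mpr (Or.inr (by simp)))
    have hMncut : ∀ p q, M.Adj p q → (p ∈ S ↔ q ∈ S) := by
      intro p q h
      have hpM := M.edge_vert h
      have hqM := M.edge_vert h.symm
      rw [hMv] at hpM hqM
      constructor
      · intro hp
        by_contra hq
        have := (hT p q (Subgraph.sup_adj.mpr (Or.inl h)) hp hq).1
        exact hpM.2 (by rw [this]; exact Or.inr rfl)
      · intro hq
        by_contra hp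
        have := (hT q p (Subgraph.sup_adj.mpr (Or.inl h.symm)) hq hp).1
        exact hqM.2 (by rw [this]; exact Or.inr rfl)
    obtain ⟨N, hNm, hNv⟩ := toH_matching G H S hmult M hMm hMncut
    refine ⟨N, hNm, ?_⟩
    rw [hNv, hMv, hHverts]
    ext z
    simp only [Set.mem_diff, Set.mem_union, Set.mem_insert_iff, Set.mem_singleton_iff]
    constructor
    · rintro ⟨⟨hzG, hzuw⟩, hzS⟩
      refine ⟨Or.inl ⟨hzG, hzS⟩, ?_⟩
      rintro (rfl | rfl)
      · exact hzuw (Or.inl rfl)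
      · exact hzS hxS
    · rintro ⟨hz1, hzux⟩
      rcases hz1 with ⟨hzG, hzS⟩ | rfl
      · refine ⟨⟨hzG, ?_⟩, hzS⟩
        rintro (rfl | rfl)
        · exact hzux (Or.inl rfl)
        · exact hzS hwS
      · exact absurd (Or.inr rfl) hzux
  · push_neg at hbig
    have hex1 : ∃ w ∈ S, 0 < G.mult u w := by
      by_contra hno
      push_neg at hno
      have hz : ∑ w ∈ Finset.univ.filter (· ∈ S), G.mult u w = 0 :=
        Finset.sum_eq_zero (fun w hw => by
          have := hno w (Finset.mem_filter.mp hw).2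
          omega)
      omega
    obtain ⟨w₁, hw₁S, hw₁p⟩ := hex1
    have hw₁mem : w₁ ∈ Finset.univ.filter (· ∈ S) :=
      Finset.mem_filter.mpr ⟨Finset.mem_univ _, hw₁S⟩
    have hsplit := Finset.add_sum_erase _ (G.mult u) hw₁mem
    have hb1 := hbig w₁ hw₁S
    have hex2 : ∃ w₂ ∈ (Finset.univ.filter (· ∈ S)).erase w₁, 0 < G.mult u w₂ := by
      by_contra hno
      push_neg at hno
      have hz : ∑ w ∈ (Finset.univ.filter (· ∈ S)).erase w₁, G.mult u w = 0 :=
        Finset.sum_eq_zero (fun w hw => by have := hno w hw; omega)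
      omega
    obtain ⟨w₂, hw₂mem, hw₂p⟩ := hex2
    have hw₂S : w₂ ∈ S := (Finset.mem_filter.mp (Finset.mem_of_mem_erase hw₂mem)).2
    have hne : w₂ ≠ w₁ := Finset.ne_of_mem_erase hw₂mem
    obtain ⟨M₁, hM₁pm, hM₁adj⟩ := hpm u w₁ hw₁p
    obtain ⟨M₂, hM₂pm, hM₂adj⟩ := hpm u w₂ hw₂p
    have t1 := tight_pair G S htight M₁ hM₁pm hw₁S huS hM₁adj.symm
    have t2 := tight_pair G S htight M₂ hM₂pm hw₂S huS hM₂adj.symm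
    obtain ⟨Q, hQpath, hQeven, hQS⟩ :=
      altPath hM₁pm.1 hM₂pm.1 (by rw [hM₁pm.2]; exact hSsub) (by rw [hM₂pm.2]; exact hSsub)
        hw₁S hw₂S huS.2 huS.2 hM₁adj.symm hM₂adj.symm
        (fun p q h hp hq => (t1 p q h hp hq).1) (fun p q h hp hq => (t2 p q h hp hq).1)
    have hadjuw₁ : G.toSimple.Adj u w₁ := hM₁adj.adj_sub
    have hadjw₂u : G.toSimple.Adj w₂ u := hM₂adj.adj_sub.symm
    set W : G.toSimple.Walk w₁ u := Q.concat hadjw₂u with hWdef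
    have hWsup : W.support = Q.support ++ [u] := by
      rw [hWdef, Walk.support_concat]
    have hWpath : W.IsPath := by
      rw [Walk.isPath_def, hWsup]
      apply List.Nodup.append hQpath.support_nodup (List.nodup_singleton u)
      intro z hz hz'
      rw [List.mem_singleton] at hz'
      exact huS.2 (hz' ▸ hQS z hz)
    have hC' : (Walk.cons hadjuw₁ W).IsCycle := by
      rw [Walk.cons_isCycle_iff]
      refine ⟨hWpath, ?_⟩
      intro hmem
      rw [hWdef, Walk.edges_concat, List.concat_eq_append, List.mem_append] at hmem
      rcases hmem with h | h
      · exact huS.2 (hQS u (Q.fst_mem_support_of_mem_edges h))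
      · rw [List.mem_singleton] at h
        rcases Sym2.eq_iff.mp h with ⟨h1, _⟩ | ⟨_, h2⟩
        · exact huS.2 (h1 ▸ hw₂S)
        · exact hne h2.symm
    have hEC' : Even (Walk.cons hadjuw₁ W).length := by
      rw [Walk.length_cons, hWdef, Walk.length_concat]
      rw [Nat.even_iff] at hQeven ⊢
      omega
    obtain ⟨M, hMm, hMv⟩ := hce.1 u _ hC' hEC'
    obtain ⟨MC, hMCm, hMCv, hMCadj⟩ := evenCycleMatching hadjuw₁ W hC' hEC'
    have hsupC' : ∀ z, z ∈ (Walk.cons hadjuw₁ W).support ↔ (z = u ∨ z ∈ Q.support) := by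
      intro z
      rw [Walk.support_cons, List.mem_cons, hWsup, List.mem_append, List.mem_singleton]
      tauto
    have hdisj : Disjoint M.support MC.support := by
      rw [hMm.support_eq_verts, hMCm.support_eq_verts, hMv, hMCv]
      exact Set.disjoint_left.mpr (fun z hz hz' => hz.2 hz')
    have hsubver : {w | w ∈ (Walk.cons hadjuw₁ W).support} ⊆ G.verts := by
      intro z hz
      rcases (hsupC' z).mp hz with rfl | h
      · exact huS.1
      · exact hSsub (hQS z h)
    have hpm' : G.IsPM (M ⊔ MC) :=
      ⟨hMm.sup hMCm hdisj, by
        rw [Subgraph.verts_sup, hMv, hMCv]; exact Set.diff_union_of_subset hsubver⟩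
    have hT := tight_pair G S htight (M ⊔ MC) hpm' hw₁S huS
      (Subgraph.sup_adj.mpr (Or.inr hMCadj.symm))
    have hw₁supp : w₁ ∈ {w | w ∈ (Walk.cons hadjuw₁ W).support} :=
      (hsupC' w₁).mpr (Or.inr Q.start_mem_support)
    have hMncut : ∀ p q, M.Adj p q → (p ∈ S ↔ q ∈ S) := by
      intro p q h
      have hpM := M.edge_vert h
      have hqM := M.edge_vert h.symm
      rw [hMv] at hpM hqM
      constructor
      · intro hp
        by_contra hq
        have := (hT p q (Subgraph.sup_adj.mpr (Or.inl h)) hp hq).1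
        exact hpM.2 (this ▸ hw₁supp)
      · intro hq
        by_contra hp
        have := (hT q p (Subgraph.sup_adj.mpr (Or.inl h.symm)) hq hp).1
        exact hqM.2 (this ▸ hw₁supp)
    obtain ⟨N, hNm, hNv⟩ := toH_matching G H S hmult M hMm hMncut
    refine ⟨N, hNm, ?_⟩
    rw [hNv, hMv, hHverts]
    ext z
    simp only [Set.mem_diff, Set.mem_union, Set.mem_setOf_eq, Set.mem_insert_iff,
      Set.mem_singleton_iff]
    constructor
    · rintro ⟨⟨hzG, hzsup⟩, hzS⟩
      refine ⟨Or.inl ⟨hzG, hzS⟩, ?_⟩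
      rintro (rfl | rfl)
      · exact hzsup ((hsupC' z).mpr (Or.inl rfl))
      · exact hzS hxS
    · rintro ⟨hz1, hzux⟩
      rcases hz1 with ⟨hzG, hzS⟩ | rfl
      · refine ⟨⟨hzG, ?_⟩, hzS⟩
        intro hzsup
        rcases (hsupC' z).mp hzsup with rfl | h
        · exact hzux (Or.inl rfl)
        · exact hzS (hQS z h)
      · exact absurd (Or.inr rfl) hzux

lemma contraction_ce [Fintype V] (G H : MG V) (S : Set V) (x : V)
    (hSsub : S ⊆ G.verts)
    (hpm : ∀ u v : V, 0 < G.mult u v → ∃ M : G.toSimple.Subgraph, G.IsPM M ∧ M.Adj u v)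
    (htight : ∀ M : G.toSimple.Subgraph, G.IsPM M →
      ∃! p : V × V, p.1 ∈ S ∧ p.2 ∈ G.verts \ S ∧ M.Adj p.1 p.2)
    (hcon : G.ContractionOf S x H) (hce : G.CycleExtendable) :
    H.CycleExtendable := by
  classical
  obtain ⟨hxS, hHverts, hmult, hmultx⟩ := hcon
  constructor
  · intro u₀ C hC hE
    by_cases hx : x ∈ C.support
    · obtain ⟨N, hNm, hNv⟩ := part1_rotated G H S x hSsub hpm htight hxS hHverts hmult hmultx
        hce (C.rotate x hx) (hC.rotate hx) (by rw [length_rotate]; exact hE)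
      refine ⟨N, hNm, ?_⟩
      rw [hNv]
      have hseq : {w | w ∈ (C.rotate x hx).support} = {w | w ∈ C.support} := by
        ext z
        exact mem_support_rotate_iff C hC hx
      rw [hseq]
    · exact part1_away G H S x hSsub htight hxS hHverts hmult hmultx hce C hC hE hx
  · intro u v h2
    have huv : u ≠ v := by
      intro h
      rw [h, H.loopless] at h2
      omega
    by_cases hux : u = x
    · have hvx : v ≠ x := fun h => huv (hux.trans h.symm)
      have h2' : 2 ≤ H.mult v x := by rw [H.symm, ← hux]; exact h2
      obtain ⟨N, hNm, hNv⟩ := part2x G H S x hSsub hpm htight hxS hHverts hmult hmultx hce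
        v hvx h2'
      refine ⟨N, hNm, ?_⟩
      rw [hNv, hux, Set.pair_comm x v]
    · by_cases hvx : v = x
      · obtain ⟨N, hNm, hNv⟩ := part2x G H S x hSsub hpm htight hxS hHverts hmult hmultx hce
          u hux (by rw [← hvx]; exact h2)
        refine ⟨N, hNm, ?_⟩
        rw [hNv, hvx]
      · have huH : u ∈ H.verts := (H.support u v (by omega)).1
        have hvH : v ∈ H.verts := (H.support u v (by omega)).2
        have huS : u ∈ G.verts \ S := by
          rw [hHverts] at huH
          rcases huH with h | h
          · exact h
          · exact absurd h hux
        have hvS : v ∈ G.verts \ S := by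
          rw [hHverts] at hvH
          rcases hvH with h | h
          · exact h
          · exact absurd h hvx
        have h2' : 2 ≤ G.mult u v := by rw [← hmult u v huS.2 hvS.2]; exact h2
        obtain ⟨M, hMm, hMv⟩ := hce.2 u v h2'
        have hadj : G.toSimple.Adj u v := by show 0 < G.mult u v; omega
        have hpm' : G.IsPM (M ⊔ G.toSimple.subgraphOfAdj hadj) := by
          constructor
          · apply hMm.sup (Subgraph.IsMatching.subgraphOfAdj hadj)
            rw [hMm.support_eq_verts, (Subgraph.IsMatching.subgraphOfAdj hadj).support_eq_verts,
              hMv, SimpleGraph.subgraphOfAdj_verts]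
            exact Set.disjoint_left.mpr (fun z hz hz' => hz.2 hz')
          · rw [Subgraph.verts_sup, hMv, SimpleGraph.subgraphOfAdj_verts]
            apply Set.diff_union_of_subset
            rintro z (rfl | rfl)
            · exact huS.1
            · exact hvS.1
        obtain ⟨⟨a, b⟩, ⟨haS, hbv, hab⟩, hu⟩ := htight _ hpm'
        have habM : M.Adj a b := by
          rcases Subgraph.sup_adj.mp hab with h | h
          · exact h
          · exfalso
            have h' : s(u, v) = s(a, b) := by simpa using h
            rcases Sym2.eq_iff.mp h' with ⟨h1, h2⟩ | ⟨h1, h2⟩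
            · exact huS.2 (by rw [h1]; exact haS)
            · exact hvS.2 (by rw [h2]; exact haS)
        have huniq : ∀ p q, M.Adj p q → p ∈ S → q ∉ S → p = a ∧ q = b := by
          intro p q h hp hq
          have hqG : q ∈ G.verts := by
            have := M.edge_vert h.symm
            rw [hMv] at this
            exact this.1
          exact Prod.ext_iff.mp (hu (p, q) ⟨hp, ⟨hqG, hq⟩, Subgraph.sup_adj.mpr (Or.inl h)⟩)
        obtain ⟨N, hNm, hNv⟩ :=
          toHx_matching G H S x a b hxS hmult hmultx M hMm haS hbv.2 habM huniq
        refine ⟨N, hNm, ?_⟩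
        rw [hNv, hMv, hHverts]
        have hxu : x ≠ u := fun h => hux h.symm
        have hxv : x ≠ v := fun h => hvx h.symm
        ext z
        simp only [Set.mem_union, Set.mem_diff, Set.mem_insert_iff, Set.mem_singleton_iff]
        constructor
        · rintro (⟨⟨hzG, hzuv⟩, hzS⟩ | rfl)
          · exact ⟨Or.inl ⟨hzG, hzS⟩, hzuv⟩
          · refine ⟨Or.inr rfl, ?_⟩
            rintro (rfl | rfl)
            · exact hxu rfl
            · exact hxv rfl
        · rintro ⟨hz1, hzuv⟩
          rcases hz1 with ⟨hzG, hzS⟩ | rfl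
          · exact Or.inl ⟨⟨hzG, hzuv⟩, hzS⟩
          · exact Or.inr rfl

end CEAux

/-- Let `G` be a matching covered graph and `∂(X)` a nontrivial tight
cut of `G`.  If `G` is cycle-extendable, then both `∂(X)`-contractions `G/X` and
`G/X̄` are cycle-extendable. -/
theorem contractions_cycleExtendable_of_cycleExtendable {V : Type*} [Fintype V]
    (G H₁ H₂ : MG V) (X : Set V) (x y : V)
    (hmc : G.MatchingCovered)
    (htight : G.IsTightCut X) (hnontrivial : G.IsNontrivialCut X)
    (h₁ : G.ContractionOf X x H₁)
    (h₂ : G.ContractionOf (G.verts \ X) y H₂)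
    (hce : G.CycleExtendable) :
    H₁.CycleExtendable ∧ H₂.CycleExtendable := by
  obtain ⟨hXsub, hXne, hXprop, htt⟩ := htight
  constructor
  · exact CEAux.contraction_ce G H₁ X x hXsub hmc.2.2 htt h₁ hce
  · apply CEAux.contraction_ce G H₂ (G.verts \ X) y Set.diff_subset hmc.2.2 ?_ h₂ hce
    intro M hM
    obtain ⟨⟨a, b⟩, ⟨haX, hbv, hab⟩, hu⟩ := htt M hM
    have hXeq : G.verts \ (G.verts \ X) = X := Set.diff_diff_cancel_left hXsub
    refine ⟨(b, a), ⟨hbv, ?_, hab.symm⟩, ?_⟩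
    · rw [hXeq]; exact haX
    · rintro ⟨c, d⟩ ⟨hc, hd, hcd⟩
      rw [hXeq] at hd
      have h' := hu (d, c) ⟨hd, hc, hcd.symm⟩
      obtain ⟨h1, h2⟩ := Prod.ext_iff.mp h'
      exact Prod.ext_iff.mpr ⟨h2, h1⟩
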